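/- Suppose every normalized weakly null sequence in a Banach space X admits a subsequence together with a biorthogonal sequence (f_n) in X* satisfying an upper ℓ_p-estimate ‖∑ a_i f_i‖ ≤ C(∑|a_i|^p)^{1/p} for some fixed p > 1 and constant C. Then X is P_N-Schur for every integer N > p' = p/(p−1): every sequence in X that is null against all homogeneous polynomials of degree ≤ N is norm null. -/

import Mathlib

open Filter Topology Finset

section AuxPNSchur
variable {X : Type*} [NormedAddCommGroup X] [NormedSpace ℂ X]


/-- Pointwise summability of the products. -/
lemma aux_summable_norm0 (N : ℕ) (hN : 2 ≤ N) (f : ℕ → X →L[ℂ] ℂ) (D : ℝ)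
    (hbound : ∀ (M : ℕ) (v : X),
      ∑ i ∈ Finset.range M, ‖f i v‖ ^ (N : ℝ) ≤ (D * ‖v‖) ^ (N : ℝ)) (w : Fin N → X) :
    Summable (fun i => ∏ j, ‖f i (w j)‖) ∧
      (∀ u : X, Summable (fun i => ‖f i u‖ ^ (N : ℝ)) ∧
        ∑' i, ‖f i u‖ ^ (N : ℝ) ≤ (D * ‖u‖) ^ (N : ℝ)) := by
  have hNpos : (0:ℝ) < N := by positivity
  have h1 : ∀ u : X, Summable (fun i => ‖f i u‖ ^ (N : ℝ)) ∧
      ∑' i, ‖f i u‖ ^ (N : ℝ) ≤ (D * ‖u‖) ^ (N : ℝ) := fun u =>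
    ⟨summable_of_sum_range_le (fun n => Real.rpow_nonneg (norm_nonneg _) _) (fun n => hbound n u),
     Real.tsum_le_of_sum_range_le (fun n => Real.rpow_nonneg (norm_nonneg _) _) (fun n => hbound n u)⟩
  refine ⟨?_, h1⟩
  have key : ∀ i, (∏ j, ‖f i (w j)‖) ≤ ∑ j, ‖f i (w j)‖ ^ (N : ℝ) := by
    intro i
    have : Nonempty (Fin N) := ⟨⟨0, by omega⟩⟩
    obtain ⟨j0, -, hj0⟩ := Finset.exists_max_image Finset.univ (fun j => ‖f i (w j)‖)
      ⟨Classical.arbitrary _, Finset.mem_univ _⟩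
    calc (∏ j, ‖f i (w j)‖) ≤ ∏ _j : Fin N, ‖f i (w j0)‖ :=
          Finset.prod_le_prod (fun j _ => norm_nonneg _) (fun j _ => hj0 j (Finset.mem_univ j))
      _ = ‖f i (w j0)‖ ^ (N:ℝ) := by
          rw [Finset.prod_const, Real.rpow_natCast]; simp
      _ ≤ ∑ j, ‖f i (w j)‖ ^ (N : ℝ) :=
          Finset.single_le_sum (f := fun j => ‖f i (w j)‖ ^ (N:ℝ)) (fun j _ => Real.rpow_nonneg (norm_nonneg _) _) (Finset.mem_univ j0)
  have hs : Summable (fun i => ∑ j, ‖f i (w j)‖ ^ (N : ℝ)) :=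
    summable_sum (fun j _ => (h1 (w j)).1)
  exact Summable.of_nonneg_of_le (fun i => Finset.prod_nonneg fun j _ => norm_nonneg _) key hs


section
variable (N : ℕ) (hN : 2 ≤ N) (f : ℕ → X →L[ℂ] ℂ) (D : ℝ) (hD : 0 ≤ D)
  (hbound : ∀ (M : ℕ) (v : X),
      ∑ i ∈ Finset.range M, ‖f i v‖ ^ (N : ℝ) ≤ (D * ‖v‖) ^ (N : ℝ))

include hN hbound in
lemma aux_summable_norm' (w : Fin N → X) : Summable (fun i => ∏ j, ‖f i (w j)‖) :=
  (aux_summable_norm0 N hN f D hbound w).1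

include hN hbound in
lemma aux_summable (w : Fin N → X) : Summable (fun i => ∏ j, f i (w j)) := by
  apply Summable.of_norm
  have := aux_summable_norm' N hN f D hbound w
  simpa [norm_prod] using this

include hN hbound hD in
lemma exists_poly : ∃ A : ContinuousMultilinearMap ℂ (fun _ : Fin N => X) ℂ,
    ∀ w : Fin N → X, A w = ∑' i, ∏ j, f i (w j) := by
  classical
  have hupd : ∀ (_inst : DecidableEq (Fin N)) (i : ℕ) (v : Fin N → X) (k : Fin N) (x : X),
      (∏ j, f i (Function.update v k x j)) = f i x * ∏ j ∈ Finset.univ.erase k, f i (v j) := by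
    intro _inst i v k x
    have : ∀ j, f i (Function.update v k x j) =
        Function.update (fun j => f i (v j)) k (f i x) j := by
      intro j
      exact (Function.apply_update (fun _ y => f i y) v k x j)
    rw [Finset.prod_congr rfl fun j _ => this j]
    rw [Finset.prod_update_of_mem (Finset.mem_univ k), Finset.erase_eq]
  set B : MultilinearMap ℂ (fun _ : Fin N => X) ℂ :=
    { toFun := fun w => ∑' i, ∏ j, f i (w j)
      map_update_add' := by
        intro inst v k a b
        have hsum : ∀ x : X, Summable (fun i => f i x * ∏ j ∈ Finset.univ.erase k, f i (v j)) := by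
          intro x
          have := aux_summable N hN f D hbound (Function.update v k x)
          apply this.congr
          intro i; rw [hupd inst]
        simp only [hupd inst, map_add, add_mul]
        exact Summable.tsum_add (hsum a) (hsum b)
      map_update_smul' := by
        intro inst v k c x
        simp only [hupd inst, map_smul, smul_eq_mul, mul_assoc]
        exact tsum_mul_left }
  have hBnorm : ∀ w : Fin N → X, ‖B w‖ ≤ (N * D ^ N) * ∏ j, ‖w j‖ := by
    intro w
    have hsn := aux_summable_norm' N hN f D hbound w
    have h1 : ‖B w‖ ≤ ∑' i, ∏ j, ‖f i (w j)‖ := by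
      have := norm_tsum_le_tsum_norm (f := fun i => ∏ j, f i (w j)) (by simpa [norm_prod] using hsn)
      simpa [B, norm_prod] using this
    refine h1.trans ?_
    by_cases hz : ∃ j, w j = 0
    · obtain ⟨j0, hj0⟩ := hz
      have : ∀ i, (∏ j, ‖f i (w j)‖) = 0 := by
        intro i
        apply Finset.prod_eq_zero (Finset.mem_univ j0)
        simp [hj0]
      rw [tsum_congr this, tsum_zero]
      have : (∏ j, ‖w j‖) = 0 := Finset.prod_eq_zero (Finset.mem_univ j0) (by simp [hj0])
      rw [this, mul_zero]
    · push_neg at hz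
      set u : Fin N → X := fun j => (‖w j‖ : ℂ)⁻¹ • w j with hu
      have hwu : ∀ j, w j = (‖w j‖ : ℂ) • u j := by
        intro j
        rw [hu]
        rw [smul_smul, mul_inv_cancel₀ (by exact_mod_cast norm_ne_zero_iff.2 (hz j)), one_smul]
      have hun : ∀ j, ‖u j‖ = 1 := by
        intro j
        rw [hu]
        simp [norm_smul, norm_inv, Complex.norm_real, abs_of_nonneg (norm_nonneg (w j)),
          inv_mul_cancel₀ (norm_ne_zero_iff.2 (hz j))]
      have hkey : ∀ i, (∏ j, ‖f i (w j)‖) = (∏ j, ‖w j‖) * ∏ j, ‖f i (u j)‖ := by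
        intro i
        rw [← Finset.prod_mul_distrib]
        refine Finset.prod_congr rfl fun j _ => ?_
        conv_lhs => rw [hwu j]
        rw [map_smul, norm_smul, Complex.norm_real, Real.norm_of_nonneg (norm_nonneg _)]
      rw [tsum_congr hkey, tsum_mul_left, mul_comm ((N : ℝ) * D ^ N)]
      apply mul_le_mul_of_nonneg_left _ (Finset.prod_nonneg fun j _ => norm_nonneg _)
      -- ∑' i, ∏ j, ‖f i (u j)‖ ≤ N * D ^ N
      have hsnu := aux_summable_norm' N hN f D hbound u
      have hptle : ∀ i, (∏ j, ‖f i (u j)‖) ≤ ∑ j, ‖f i (u j)‖ ^ (N : ℝ) := by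
        intro i
        have : Nonempty (Fin N) := ⟨⟨0, by omega⟩⟩
        obtain ⟨j0, -, hj0⟩ := Finset.exists_max_image Finset.univ (fun j => ‖f i (u j)‖)
          ⟨Classical.arbitrary _, Finset.mem_univ _⟩
        calc (∏ j, ‖f i (u j)‖) ≤ ∏ _j : Fin N, ‖f i (u j0)‖ :=
              Finset.prod_le_prod (fun j _ => norm_nonneg _) (fun j _ => hj0 j (Finset.mem_univ j))
          _ = ‖f i (u j0)‖ ^ (N:ℝ) := by rw [Finset.prod_const, Real.rpow_natCast]; simp
          _ ≤ ∑ j, ‖f i (u j)‖ ^ (N : ℝ) :=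
              Finset.single_le_sum (f := fun j => ‖f i (u j)‖ ^ (N:ℝ))
                (fun j _ => Real.rpow_nonneg (norm_nonneg _) _) (Finset.mem_univ j0)
      have hterm : ∀ j : Fin N, Summable (fun i => ‖f i (u j)‖ ^ (N : ℝ)) := fun j =>
        summable_of_sum_range_le (fun n => Real.rpow_nonneg (norm_nonneg _) _)
          (fun n => hbound n (u j))
      calc ∑' i, ∏ j, ‖f i (u j)‖ ≤ ∑' i, ∑ j, ‖f i (u j)‖ ^ (N : ℝ) :=
            Summable.tsum_le_tsum hptle hsnu (summable_sum fun j _ => hterm j)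
        _ = ∑ j, ∑' i, ‖f i (u j)‖ ^ (N : ℝ) := Summable.tsum_finsetSum fun j _ => hterm j
        _ ≤ ∑ _j : Fin N, D ^ N := by
            refine Finset.sum_le_sum fun j _ => ?_
            have := Real.tsum_le_of_sum_range_le (f := fun i => ‖f i (u j)‖ ^ (N : ℝ))
              (fun n => Real.rpow_nonneg (norm_nonneg _) _) (fun n => hbound n (u j))
            calc ∑' i, ‖f i (u j)‖ ^ (N : ℝ) ≤ (D * ‖u j‖) ^ (N : ℝ) := this
              _ = D ^ N := by rw [hun j, mul_one, Real.rpow_natCast]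
        _ = (N : ℝ) * D ^ N := by rw [Finset.sum_const, Finset.card_univ, Fintype.card_fin,
              nsmul_eq_mul]
  exact ⟨B.mkContinuous ((N : ℝ) * D ^ N) hBnorm, fun w => rfl⟩
end


lemma dual_est (p q : ℝ) (hp : 1 < p) (hq : q = p / (p - 1)) (C : ℝ) (hC : 0 ≤ C)
    (f : ℕ → X →L[ℂ] ℂ)
    (hf : ∀ (M : ℕ) (a : ℕ → ℂ), ‖∑ i ∈ Finset.range M, a i • f i‖ ≤
      C * (∑ i ∈ Finset.range M, ‖a i‖ ^ p) ^ (1 / p))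
    (M : ℕ) (v : X) :
    ∑ i ∈ Finset.range M, ‖f i v‖ ^ q ≤ (C * ‖v‖) ^ q := by
  classical
  have hp0 : (0:ℝ) < p - 1 := by linarith
  have hq1 : 1 < q := by
    rw [hq, lt_div_iff₀ hp0]; linarith
  have hq0 : 0 < q := by linarith
  have hpq : 1 / p + 1 / q = 1 := by
    rw [hq]; field_simp; ring
  have hqp : (q - 1) * p = q := by
    rw [hq]; field_simp; ring
  set S := ∑ i ∈ Finset.range M, ‖f i v‖ ^ q with hS
  have hS0 : 0 ≤ S := Finset.sum_nonneg fun i _ => Real.rpow_nonneg (norm_nonneg _) _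
  rcases eq_or_lt_of_le hS0 with hSe | hSpos
  · rw [← hSe]
    exact Real.rpow_nonneg (by positivity) _
  · set a : ℕ → ℂ := fun i => if f i v = 0 then 0 else ((‖f i v‖ ^ q : ℝ) : ℂ) / f i v with ha
    have haf : ∀ i, a i * f i v = ((‖f i v‖ ^ q : ℝ) : ℂ) := by
      intro i
      by_cases h : f i v = 0
      · simp [ha, h, Real.zero_rpow (ne_of_gt hq0)]
      · simp only [ha, if_neg h]
        rw [div_mul_cancel₀ _ h]
    have hna : ∀ i, ‖a i‖ = ‖f i v‖ ^ (q - 1) := by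
      intro i
      by_cases h : f i v = 0
      · simp [ha, h, Real.zero_rpow (by intro h'; linarith [h'] : q - 1 ≠ 0)]
      · have hn : (0:ℝ) < ‖f i v‖ := norm_pos_iff.2 h
        simp only [ha, if_neg h, norm_div, Complex.norm_real,
          Real.norm_of_nonneg (Real.rpow_nonneg (norm_nonneg _) _)]
        rw [Real.rpow_sub hn, Real.rpow_one]
    have hap : ∀ i, ‖a i‖ ^ p = ‖f i v‖ ^ q := by
      intro i
      rw [hna i, ← Real.rpow_mul (norm_nonneg _), hqp]
    -- S as value of the functional
    have key : (∑ i ∈ Finset.range M, a i • f i) v = ((S : ℝ) : ℂ) := by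
      have hcast : ((S : ℝ) : ℂ) = ∑ i ∈ Finset.range M, ((‖f i v‖ ^ q : ℝ) : ℂ) := by
        rw [hS]; push_cast; rfl
      rw [hcast, ContinuousLinearMap.sum_apply]
      refine Finset.sum_congr rfl fun i _ => ?_
      rw [ContinuousLinearMap.smul_apply, smul_eq_mul, haf i]
    have hSle : S ≤ C * S ^ (1 / p) * ‖v‖ := by
      have h1 : ‖(∑ i ∈ Finset.range M, a i • f i) v‖ ≤
          ‖∑ i ∈ Finset.range M, a i • f i‖ * ‖v‖ :=
        ContinuousLinearMap.le_opNorm _ _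
      rw [key] at h1
      have h2 : ‖((S : ℝ) : ℂ)‖ = S := by
        rw [Complex.norm_real, Real.norm_of_nonneg hS0]
      rw [h2] at h1
      have h3 : (∑ i ∈ Finset.range M, ‖a i‖ ^ p) = S := by
        rw [hS]; exact Finset.sum_congr rfl fun i _ => hap i
      calc S ≤ ‖∑ i ∈ Finset.range M, a i • f i‖ * ‖v‖ := h1
        _ ≤ (C * (∑ i ∈ Finset.range M, ‖a i‖ ^ p) ^ (1 / p)) * ‖v‖ :=
            mul_le_mul_of_nonneg_right (hf M a) (norm_nonneg v)
        _ = C * S ^ (1 / p) * ‖v‖ := by rw [h3]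
    have hsplit : S = S ^ (1 / p) * S ^ (1 / q) := by
      rw [← Real.rpow_add hSpos, hpq, Real.rpow_one]
    have hq' : S ^ (1 / q) ≤ C * ‖v‖ := by
      have hppos : 0 < S ^ (1 / p) := Real.rpow_pos_of_pos hSpos _
      have : S ^ (1 / p) * S ^ (1 / q) ≤ S ^ (1 / p) * (C * ‖v‖) := by
        calc S ^ (1 / p) * S ^ (1 / q) = S := hsplit.symm
          _ ≤ C * S ^ (1 / p) * ‖v‖ := hSle
          _ = S ^ (1 / p) * (C * ‖v‖) := by ring
      exact le_of_mul_le_mul_left this hppos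
    calc S = (S ^ (1 / q)) ^ q := by
          rw [← Real.rpow_mul hS0, one_div, inv_mul_cancel₀ (ne_of_gt hq0), Real.rpow_one]
      _ ≤ (C * ‖v‖) ^ q :=
          Real.rpow_le_rpow (Real.rpow_nonneg hS0 _) hq' (le_of_lt hq0)


lemma bound_N (q : ℝ) (hq1 : 1 < q) (N : ℕ) (hNq : q ≤ (N : ℝ)) (C : ℝ) (hC : 0 ≤ C)
    (f : ℕ → X →L[ℂ] ℂ)
    (hest : ∀ (M : ℕ) (v : X), ∑ i ∈ Finset.range M, ‖f i v‖ ^ q ≤ (C * ‖v‖) ^ q)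
    (M : ℕ) (v : X) :
    ∑ i ∈ Finset.range M, ‖f i v‖ ^ (N : ℝ) ≤ (C * ‖v‖) ^ (N : ℝ) := by
  have hq0 : 0 < q := by linarith
  have hN0 : (0:ℝ) < N := by linarith
  have hCv0 : 0 ≤ C * ‖v‖ := mul_nonneg hC (norm_nonneg v)
  have hfi : ∀ i, ‖f i v‖ ≤ C * ‖v‖ := by
    intro i
    have h1 : ‖f i v‖ ^ q ≤ (C * ‖v‖) ^ q := by
      refine le_trans ?_ (hest (i + 1) v)
      exact Finset.single_le_sum (f := fun i => ‖f i v‖ ^ q)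
        (fun i _ => Real.rpow_nonneg (norm_nonneg _) _) (Finset.self_mem_range_succ i)
    by_contra hcon
    push_neg at hcon
    exact absurd h1 (not_le.2 (Real.rpow_lt_rpow hCv0 hcon hq0))
  have hterm : ∀ i, ‖f i v‖ ^ (N : ℝ) ≤ (C * ‖v‖) ^ ((N : ℝ) - q) * ‖f i v‖ ^ q := by
    intro i
    have hsplit : ‖f i v‖ ^ (N : ℝ) = ‖f i v‖ ^ ((N : ℝ) - q) * ‖f i v‖ ^ q := by
      rw [← Real.rpow_add' (norm_nonneg _) (by rw [sub_add_cancel]; exact ne_of_gt hN0),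
        sub_add_cancel]
    rw [hsplit]
    exact mul_le_mul_of_nonneg_right
      (Real.rpow_le_rpow (norm_nonneg _) (hfi i) (by linarith))
      (Real.rpow_nonneg (norm_nonneg _) _)
  calc ∑ i ∈ Finset.range M, ‖f i v‖ ^ (N : ℝ)
      ≤ ∑ i ∈ Finset.range M, (C * ‖v‖) ^ ((N : ℝ) - q) * ‖f i v‖ ^ q :=
        Finset.sum_le_sum fun i _ => hterm i
    _ = (C * ‖v‖) ^ ((N : ℝ) - q) * ∑ i ∈ Finset.range M, ‖f i v‖ ^ q := by
        rw [Finset.mul_sum]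
    _ ≤ (C * ‖v‖) ^ ((N : ℝ) - q) * (C * ‖v‖) ^ q :=
        mul_le_mul_of_nonneg_left (hest M v) (Real.rpow_nonneg hCv0 _)
    _ = (C * ‖v‖) ^ (N : ℝ) := by
        rw [← Real.rpow_add' hCv0 (by rw [sub_add_cancel]; exact ne_of_gt hN0), sub_add_cancel]

end AuxPNSchur

/-- If every normalized weakly null sequence in `X` has a subsequence admitting a
biorthogonal sequence of functionals satisfying an upper `ℓ_p`-estimate (for a fixed
`p > 1` and constant `C`), then `X` is `P_N`-Schur for every integer `N > p' = p/(p-1)`: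
every sequence null against all homogeneous polynomials of degree at most `N` is norm
null. -/
theorem PNSchur_of_biorthogonal_upper_p_estimates {X : Type*} [NormedAddCommGroup X]
    [NormedSpace ℂ X] [CompleteSpace X]
    (p C : ℝ) (hp : 1 < p)
    (H : ∀ y : ℕ → X, (∀ n, ‖y n‖ = 1) →
      (∀ φ : X →L[ℂ] ℂ, Tendsto (fun n => φ (y n)) atTop (𝓝 0)) →
      ∃ ψ : ℕ → ℕ, StrictMono ψ ∧
        ∃ f : ℕ → X →L[ℂ] ℂ,
          (∀ n m, f n (y (ψ m)) = if n = m then 1 else 0) ∧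
          (∀ (M : ℕ) (a : ℕ → ℂ),
            ‖∑ i ∈ Finset.range M, a i • f i‖ ≤
              C * (∑ i ∈ Finset.range M, ‖a i‖ ^ p) ^ (1 / p)))
    (N : ℕ) (hN : p / (p - 1) < N) :
    ∀ x : ℕ → X,
      (∀ M : ℕ, 1 ≤ M → M ≤ N →
        ∀ A : ContinuousMultilinearMap ℂ (fun _ : Fin M => X) ℂ,
          Tendsto (fun n => A (fun _ => x n)) atTop (𝓝 0)) →
      Tendsto (fun n => ‖x n‖) atTop (𝓝 0) := by
  intro x hx
  set q : ℝ := p / (p - 1) with hqdef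
  have hp0 : (0:ℝ) < p - 1 := by linarith
  have hq1 : 1 < q := by
    rw [hqdef, lt_div_iff₀ hp0]; linarith
  have hNR : (1:ℝ) < (N:ℝ) := lt_trans hq1 hN
  have hN1 : 1 ≤ N := by exact_mod_cast hNR.le
  have hN2 : 2 ≤ N := by
    have : 1 < N := by exact_mod_cast hNR
    omega
  by_contra hcon
  rw [Metric.tendsto_atTop] at hcon
  push_neg at hcon
  obtain ⟨ε, hε, hfreq⟩ := hcon
  have hfreq' : ∃ᶠ n in atTop, ε ≤ ‖x n‖ := by
    rw [Filter.frequently_atTop]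
    intro N0
    obtain ⟨n, hn1, hn2⟩ := hfreq N0
    refine ⟨n, hn1, ?_⟩
    rwa [Real.dist_eq, sub_zero, abs_of_nonneg (norm_nonneg _)] at hn2
  obtain ⟨φ, hφ, hφε⟩ := Filter.extraction_of_frequently_atTop hfreq'
  have hxφ0 : ∀ n, ‖x (φ n)‖ ≠ 0 := fun n => ne_of_gt (lt_of_lt_of_le hε (hφε n))
  set y : ℕ → X := fun n => ((‖x (φ n)‖ : ℂ))⁻¹ • x (φ n) with hy
  have hy1 : ∀ n, ‖y n‖ = 1 := by
    intro n
    rw [hy]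
    simp only [norm_smul, norm_inv, Complex.norm_real, Real.norm_of_nonneg (norm_nonneg _)]
    rw [inv_mul_cancel₀ (hxφ0 n)]
  have hweak : ∀ g : X →L[ℂ] ℂ, Tendsto (fun n => g (y n)) atTop (𝓝 0) := by
    intro g
    have h1 : Tendsto (fun n => g (x n)) atTop (𝓝 0) := by
      have := hx 1 le_rfl hN1 ((ContinuousMultilinearMap.ofSubsingleton ℂ X ℂ (0 : Fin 1)) g)
      simpa using this
    have h2 : Tendsto (fun n => ‖g (x (φ n))‖) atTop (𝓝 0) := by
      have := (tendsto_zero_iff_norm_tendsto_zero.1 h1).comp hφ.tendsto_atTop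
      exact this
    rw [tendsto_zero_iff_norm_tendsto_zero]
    have hbd : ∀ n, ‖g (y n)‖ ≤ ε⁻¹ * ‖g (x (φ n))‖ := by
      intro n
      rw [hy]
      simp only [map_smul, smul_eq_mul, norm_mul, norm_inv, Complex.norm_real,
        Real.norm_of_nonneg (norm_nonneg _)]
      apply mul_le_mul_of_nonneg_right _ (norm_nonneg _)
      rw [inv_le_inv₀ (lt_of_lt_of_le hε (hφε n)) hε]
      exact hφε n
    have hlim : Tendsto (fun n => ε⁻¹ * ‖g (x (φ n))‖) atTop (𝓝 0) := by
      have := h2.const_mul ε⁻¹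
      simpa using this
    exact squeeze_zero (fun n => norm_nonneg _) hbd hlim
  obtain ⟨ψ, hψ, f, hbio, hest⟩ := H y hy1 hweak
  -- 1 ≤ C
  have hC1 : (1:ℝ) ≤ C := by
    have h1 := hest 1 (fun _ => (1:ℂ))
    simp only [Finset.range_one, Finset.sum_singleton, one_smul, norm_one,
      Real.one_rpow, mul_one] at h1
    have h2 : (1:ℝ) ≤ ‖f 0‖ := by
      have h3 := (f 0).le_opNorm (y (ψ 0))
      rw [hy1 (ψ 0), mul_one, hbio 0 0, if_pos rfl, norm_one] at h3
      exact h3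
    linarith
  have hC0 : (0:ℝ) ≤ C := by linarith
  have hest2 := dual_est p q hp hqdef C hC0 f hest
  have hbnd := bound_N q hq1 N hN.le C hC0 f hest2
  obtain ⟨A, hA⟩ := exists_poly N hN2 f C hC0 hbnd
  set z : ℕ → X := fun k => x (φ (ψ k)) with hz
  have hzy : ∀ k, z k = (‖z k‖ : ℂ) • y (ψ k) := by
    intro k
    show x (φ (ψ k)) = (‖x (φ (ψ k))‖ : ℂ) • (((‖x (φ (ψ k))‖ : ℂ))⁻¹ • x (φ (ψ k)))
    rw [smul_smul, mul_inv_cancel₀ (by exact_mod_cast hxφ0 (ψ k)), one_smul]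
  have hfz : ∀ i k, f i (z k) = if i = k then ((‖z k‖ : ℂ)) else 0 := by
    intro i k
    conv_lhs => rw [hzy k]
    rw [map_smul, hbio i k, smul_eq_mul, mul_ite, mul_one, mul_zero]
  have hAz : ∀ k, A (fun _ => z k) = ((‖z k‖ : ℂ)) ^ N := by
    intro k
    rw [hA]
    have hterm : ∀ i, (∏ _j : Fin N, f i (z k)) = if i = k then ((‖z k‖:ℂ))^N else 0 := by
      intro i
      rw [Finset.prod_const, Finset.card_univ, Fintype.card_fin, hfz i k]
      split
      · rfl
      · exact zero_pow (by omega)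
    rw [tsum_congr hterm, tsum_eq_single k (fun b hb => if_neg hb), if_pos rfl]
  have hT : Tendsto (fun k => A (fun _ => z k)) atTop (𝓝 0) :=
    (hx N hN1 le_rfl A).comp (hφ.comp hψ).tendsto_atTop
  have hTn : Tendsto (fun k => ‖A (fun _ => z k)‖) atTop (𝓝 0) :=
    tendsto_zero_iff_norm_tendsto_zero.1 hT
  have hlow : ∀ k, ε ^ N ≤ ‖A (fun _ => z k)‖ := by
    intro k
    rw [hAz k, norm_pow, Complex.norm_real, Real.norm_of_nonneg (norm_nonneg _)]
    exact pow_le_pow_left₀ hε.le (le_trans (hφε (ψ k)) (le_of_eq rfl)) N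
  obtain ⟨k, hk⟩ := (hTn.eventually_lt_const (pow_pos hε N)).exists
  exact absurd (hlow k) (not_le.2 hk)
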